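/- For every y ∈ (0,1) with y ≠ 1/2 and every x ∈ [0,1], one has x·ln(x/y) + (1−x)·ln((1−x)/(1−y)) ≥ (ln((1−y)/y) / (1−2y)) · (x−y)², where the terms x·ln(x/y) and (1−x)·ln((1−x)/(1−y)) are interpreted as 0 when x = 0 and x = 1 respectively. -/

import Mathlib

open Real Set

namespace Stmt10Aux

/-- The auxiliary function `F`. -/
noncomputable def Fa (y C t : ℝ) : ℝ :=
  t * Real.log t - t * Real.log y + (1 - t) * Real.log (1 - t)
    - (1 - t) * Real.log (1 - y) - C * (t - y) ^ 2

/-- The derivative of `F`. -/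
noncomputable def Ga (y C t : ℝ) : ℝ :=
  Real.log t - Real.log (1 - t) - (Real.log y - Real.log (1 - y)) - 2 * C * (t - y)

lemma continuous_Fa (y C : ℝ) : Continuous (Fa y C) := by
  unfold Fa
  have h1 : Continuous fun t : ℝ => t * Real.log t := Real.continuous_mul_log
  have h2 : Continuous fun t : ℝ => (1 - t) * Real.log (1 - t) :=
    Real.continuous_mul_log.comp (continuous_const.sub continuous_id)
  fun_prop

lemma hasDerivAt_Fa {y C t : ℝ} (ht0 : 0 < t) (ht1 : t < 1) :
    HasDerivAt (Fa y C) (Ga y C t) t := by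
  have h1 : HasDerivAt (fun s : ℝ => s * Real.log s) (Real.log t + 1) t :=
    Real.hasDerivAt_mul_log ht0.ne'
  have h2 : HasDerivAt (fun s : ℝ => s * Real.log y) (Real.log y) t := by
    simpa using (hasDerivAt_id t).mul_const (Real.log y)
  have h3 : HasDerivAt (fun s : ℝ => (1 - s) * Real.log (1 - s))
      ((Real.log (1 - t) + 1) * (-1)) t := by
    have hinner : HasDerivAt (fun s : ℝ => 1 - s) (-1) t := by
      simpa using (hasDerivAt_id t).const_sub (1:ℝ)
    exact (Real.hasDerivAt_mul_log (by linarith : (1:ℝ) - t ≠ 0)).comp t hinner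
  have h4 : HasDerivAt (fun s : ℝ => (1 - s) * Real.log (1 - y)) (-Real.log (1 - y)) t := by
    have hinner : HasDerivAt (fun s : ℝ => 1 - s) (-1) t := by
      simpa using (hasDerivAt_id t).const_sub (1:ℝ)
    simpa using hinner.mul_const (Real.log (1 - y))
  have h5 : HasDerivAt (fun s : ℝ => C * (s - y) ^ 2) (C * (2 * (t - y))) t := by
    have hinner : HasDerivAt (fun s : ℝ => s - y) 1 t := by
      simpa using (hasDerivAt_id t).sub_const y
    have := (hinner.pow 2).const_mul C
    simpa using this
  have := (((h1.sub h2).add h3).sub h4).sub h5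
  refine this.congr_deriv ?_
  unfold Ga; ring

lemma hasDerivAt_Ga {y C t : ℝ} (ht0 : 0 < t) (ht1 : t < 1) :
    HasDerivAt (Ga y C) (t⁻¹ + (1 - t)⁻¹ - 2 * C) t := by
  have h1 : HasDerivAt Real.log t⁻¹ t := Real.hasDerivAt_log ht0.ne'
  have hinner : HasDerivAt (fun s : ℝ => 1 - s) (-1) t := by
    simpa using (hasDerivAt_id t).const_sub (1:ℝ)
  have h2 : HasDerivAt (fun s : ℝ => Real.log (1 - s)) ((1 - t)⁻¹ * (-1)) t :=
    (Real.hasDerivAt_log (by linarith : (1:ℝ) - t ≠ 0)).comp t hinner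
  have h3 : HasDerivAt (fun s : ℝ => Real.log y - Real.log (1 - y)) 0 t :=
    hasDerivAt_const _ _
  have h4 : HasDerivAt (fun s : ℝ => 2 * C * (s - y)) (2 * C) t := by
    have hinner2 : HasDerivAt (fun s : ℝ => s - y) 1 t := by
      simpa using (hasDerivAt_id t).sub_const y
    simpa using hinner2.const_mul (2 * C)
  have := ((h1.sub h2).sub h3).sub h4
  refine this.congr_deriv ?_
  ring

lemma hasDerivAt_Ga' {C t : ℝ} (ht0 : 0 < t) (ht1 : t < 1) :
    HasDerivAt (fun s : ℝ => s⁻¹ + (1 - s)⁻¹ - 2 * C)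
      (-(t ^ 2)⁻¹ + ((1 - t) ^ 2)⁻¹) t := by
  have h1 : HasDerivAt (fun s : ℝ => s⁻¹) (-(t ^ 2)⁻¹) t := hasDerivAt_inv ht0.ne'
  have hinner : HasDerivAt (fun s : ℝ => 1 - s) (-1) t := by
    simpa using (hasDerivAt_id t).const_sub (1:ℝ)
  have h2 : HasDerivAt (fun s : ℝ => (1 - s)⁻¹) (-(((1 - t) ^ 2)⁻¹) * (-1)) t :=
    (hasDerivAt_inv (by linarith : (1:ℝ) - t ≠ 0)).comp t hinner
  have := (h1.add h2).sub_const (2 * C)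
  refine this.congr_deriv ?_
  ring

/-- `G` is concave on `(0, 1/2]`. -/
lemma concaveOn_Ga (y C : ℝ) : ConcaveOn ℝ (Ioc (0:ℝ) (1/2)) (Ga y C) := by
  have hsub : Ioc (0:ℝ) (1/2) ⊆ Ioo (0:ℝ) 1 := fun t ht => ⟨ht.1, by linarith [ht.2]⟩
  have hint : interior (Ioc (0:ℝ) (1/2)) = Ioo (0:ℝ) (1/2) := interior_Ioc
  apply concaveOn_of_hasDerivWithinAt2_nonpos (f' := fun t => t⁻¹ + (1 - t)⁻¹ - 2 * C)
    (f'' := fun t => -(t ^ 2)⁻¹ + ((1 - t) ^ 2)⁻¹) (convex_Ioc _ _)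
  · intro t ht
    exact (hasDerivAt_Ga (hsub ht).1 (hsub ht).2).continuousAt.continuousWithinAt
  · intro t ht
    rw [hint] at ht
    exact (hasDerivAt_Ga ht.1 (by linarith [ht.2])).hasDerivWithinAt
  · intro t ht
    rw [hint] at ht
    exact (hasDerivAt_Ga' ht.1 (by linarith [ht.2])).hasDerivWithinAt
  · intro t ht
    rw [hint] at ht
    have ht0 := ht.1
    have ht2 := ht.2
    have h : t ^ 2 ≤ (1 - t) ^ 2 := by nlinarith
    have h2 : ((1 - t) ^ 2)⁻¹ ≤ (t ^ 2)⁻¹ := by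
      apply inv_anti₀ (by positivity) h
    linarith

/-- `G` is convex on `[1/2, 1)`. -/
lemma convexOn_Ga (y C : ℝ) : ConvexOn ℝ (Ico (1/2 : ℝ) 1) (Ga y C) := by
  have hsub : Ico (1/2 : ℝ) 1 ⊆ Ioo (0:ℝ) 1 := fun t ht => ⟨by linarith [ht.1], ht.2⟩
  have hint : interior (Ico (1/2 : ℝ) 1) = Ioo (1/2 : ℝ) 1 := interior_Ico
  apply convexOn_of_hasDerivWithinAt2_nonneg (f' := fun t => t⁻¹ + (1 - t)⁻¹ - 2 * C)
    (f'' := fun t => -(t ^ 2)⁻¹ + ((1 - t) ^ 2)⁻¹) (convex_Ico _ _)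
  · intro t ht
    exact (hasDerivAt_Ga (hsub ht).1 (hsub ht).2).continuousAt.continuousWithinAt
  · intro t ht
    rw [hint] at ht
    exact (hasDerivAt_Ga (by linarith [ht.1]) ht.2).hasDerivWithinAt
  · intro t ht
    rw [hint] at ht
    exact (hasDerivAt_Ga' (by linarith [ht.1]) ht.2).hasDerivWithinAt
  · intro t ht
    rw [hint] at ht
    have ht1 := ht.1
    have ht2 := ht.2
    have h : (1 - t) ^ 2 ≤ t ^ 2 := by nlinarith
    have h2 : (t ^ 2)⁻¹ ≤ ((1 - t) ^ 2)⁻¹ := by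
      apply inv_anti₀ (by nlinarith) h
    linarith

/-- A concave function vanishing at `p ≤ q` is nonneg on `[p,q]`. -/
lemma concave_nonneg_inside {s : Set ℝ} {f : ℝ → ℝ} (hf : ConcaveOn ℝ s f)
    {p q x : ℝ} (hp : p ∈ s) (hq : q ∈ s) (hfp : f p = 0) (hfq : f q = 0)
    (h1 : p ≤ x) (h2 : x ≤ q) : 0 ≤ f x := by
  rcases eq_or_lt_of_le (h1.trans h2) with h | hpq
  · have hxp : x = p := le_antisymm (h ▸ h2) h1
    rw [hxp, hfp]
  · have hden : 0 < q - p := by linarith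
    have ha0 : 0 ≤ (q - x) / (q - p) := div_nonneg (by linarith) hden.le
    have hb0 : 0 ≤ (x - p) / (q - p) := div_nonneg (by linarith) hden.le
    have hab : (q - x) / (q - p) + (x - p) / (q - p) = 1 := by
      field_simp
      ring
    have hcomb : ((q - x) / (q - p)) • p + ((x - p) / (q - p)) • q = x := by
      simp only [smul_eq_mul]
      field_simp
      ring
    have := hf.2 hp hq ha0 hb0 hab
    rw [hcomb, hfp, hfq, smul_eq_mul, smul_eq_mul, mul_zero, mul_zero, add_zero] at this
    exact this

/-- A concave function vanishing at `p < q` is nonpos left of `p`. -/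
lemma concave_nonpos_left {s : Set ℝ} {f : ℝ → ℝ} (hf : ConcaveOn ℝ s f)
    {p q x : ℝ} (hx : x ∈ s) (hq : q ∈ s) (hfp : f p = 0) (hfq : f q = 0)
    (h1 : x ≤ p) (h2 : p < q) : f x ≤ 0 := by
  have hden : 0 < q - x := by linarith
  have ha0 : 0 ≤ (q - p) / (q - x) := div_nonneg (by linarith) hden.le
  have hb0 : 0 ≤ (p - x) / (q - x) := div_nonneg (by linarith) hden.le
  have hab : (q - p) / (q - x) + (p - x) / (q - x) = 1 := by
    field_simp
    ring
  have hcomb : ((q - p) / (q - x)) • x + ((p - x) / (q - x)) • q = p := by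
    simp only [smul_eq_mul]
    field_simp
    ring
  have := hf.2 hx hq ha0 hb0 hab
  rw [hcomb, hfp, hfq, smul_eq_mul, smul_eq_mul, mul_zero, add_zero] at this
  have hapos : 0 < (q - p) / (q - x) := div_pos (by linarith) hden
  nlinarith

/-- A concave function vanishing at `p < q` is nonpos right of `q`. -/
lemma concave_nonpos_right {s : Set ℝ} {f : ℝ → ℝ} (hf : ConcaveOn ℝ s f)
    {p q x : ℝ} (hp : p ∈ s) (hx : x ∈ s) (hfp : f p = 0) (hfq : f q = 0)
    (h1 : q ≤ x) (h2 : p < q) : f x ≤ 0 := by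
  rcases eq_or_lt_of_le h1 with h | hqx
  · rw [← h, hfq]
  · have hden : 0 < x - p := by linarith
    have ha0 : 0 ≤ (x - q) / (x - p) := div_nonneg (by linarith) hden.le
    have hb0 : 0 ≤ (q - p) / (x - p) := div_nonneg (by linarith) hden.le
    have hab : (x - q) / (x - p) + (q - p) / (x - p) = 1 := by
      field_simp
      ring
    have hcomb : ((x - q) / (x - p)) • p + ((q - p) / (x - p)) • x = q := by
      simp only [smul_eq_mul]
      field_simp
      ring
    have := hf.2 hp hx ha0 hb0 hab
    rw [hcomb, hfp, hfq, smul_eq_mul, smul_eq_mul, mul_zero, zero_add] at this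
    have hbpos : 0 < (q - p) / (x - p) := div_pos (by linarith) hden
    nlinarith

lemma key (y : ℝ) (hy0 : 0 < y) (hy2 : y < 1/2) (x : ℝ) (hx0 : 0 ≤ x) (hx1 : x ≤ 1) :
    x * Real.log (x / y) + (1 - x) * Real.log ((1 - x) / (1 - y)) ≥
      (Real.log ((1 - y) / y) / (1 - 2 * y)) * (x - y) ^ 2 := by
  have hy1 : y < 1 := by linarith
  have h1y : (0:ℝ) < 1 - y := by linarith
  have h2y : (0:ℝ) < 1 - 2 * y := by linarith
  set L : ℝ := Real.log (1 - y) - Real.log y with hLdef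
  set C : ℝ := L / (1 - 2 * y) with hCdef
  have hCL : C * (1 - 2 * y) = L := div_mul_cancel₀ _ h2y.ne'
  -- zeros of G
  have hGy : Ga y C y = 0 := by unfold Ga; ring
  have hGhalf : Ga y C (1/2) = 0 := by
    unfold Ga
    have : Real.log (1 - 1/2 : ℝ) = Real.log (1/2 : ℝ) := by norm_num
    rw [this]
    linarith [hCL]
  have hG1y : Ga y C (1 - y) = 0 := by
    unfold Ga
    have : (1 : ℝ) - (1 - y) = y := by ring
    rw [this]
    linarith [hCL]
  -- zeros of F
  have hFy : Fa y C y = 0 := by unfold Fa; ring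
  have hF1y : Fa y C (1 - y) = 0 := by
    unfold Fa
    have : (1 : ℝ) - (1 - y) = y := by ring
    rw [this]
    nlinarith [hCL]
  -- membership facts
  have hyI : y ∈ Ioc (0:ℝ) (1/2) := ⟨hy0, hy2.le⟩
  have hhalfI : (1/2 : ℝ) ∈ Ioc (0:ℝ) (1/2) := ⟨by norm_num, le_refl _⟩
  have hhalfI2 : (1/2 : ℝ) ∈ Ico (1/2 : ℝ) 1 := ⟨le_refl _, by norm_num⟩
  have h1yI : (1 - y) ∈ Ico (1/2 : ℝ) 1 := ⟨by linarith, by linarith⟩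
  have hconc := concaveOn_Ga y C
  have hconv := (convexOn_Ga y C).neg
  have hnegGhalf : -Ga y C (1/2) = 0 := by rw [hGhalf]; ring
  have hnegG1y : -Ga y C (1 - y) = 0 := by rw [hG1y]; ring
  -- main claim : Fa y C x ≥ 0 on [0,1]
  have hmain : 0 ≤ Fa y C x := by
    rcases le_total x y with hcase | hcase
    · -- antitone on [0, y]
      have hanti : AntitoneOn (Fa y C) (Icc 0 y) := by
        apply antitoneOn_of_hasDerivWithinAt_nonpos (f' := Ga y C) (convex_Icc _ _) ((continuous_Fa y C).continuousOn)
        · intro t ht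
          rw [interior_Icc] at ht
          exact (hasDerivAt_Fa ht.1 (by linarith [ht.2])).hasDerivWithinAt
        · intro t ht
          rw [interior_Icc] at ht
          exact concave_nonpos_left hconc ⟨ht.1, by linarith [ht.2]⟩ hhalfI hGy hGhalf
            (by linarith [ht.2]) hy2
      have := hanti ⟨hx0, hcase⟩ ⟨hy0.le, le_refl _⟩ hcase
      linarith [hFy]
    rcases le_total x (1/2) with hcase2 | hcase2
    · -- monotone on [y, 1/2]
      have hmono : MonotoneOn (Fa y C) (Icc y (1/2)) := by
        apply monotoneOn_of_hasDerivWithinAt_nonneg (f' := Ga y C) (convex_Icc _ _) ((continuous_Fa y C).continuousOn)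
        · intro t ht
          rw [interior_Icc] at ht
          exact (hasDerivAt_Fa (by linarith [ht.1]) (by linarith [ht.2])).hasDerivWithinAt
        · intro t ht
          rw [interior_Icc] at ht
          exact concave_nonneg_inside hconc hyI hhalfI hGy hGhalf (ht.1).le (ht.2).le
      have := hmono ⟨le_refl _, hy2.le⟩ ⟨hcase, hcase2⟩ hcase
      linarith [hFy]
    rcases le_total x (1 - y) with hcase3 | hcase3
    · -- antitone on [1/2, 1-y]
      have hanti : AntitoneOn (Fa y C) (Icc (1/2) (1 - y)) := by
        apply antitoneOn_of_hasDerivWithinAt_nonpos (f' := Ga y C) (convex_Icc _ _) ((continuous_Fa y C).continuousOn)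
        · intro t ht
          rw [interior_Icc] at ht
          exact (hasDerivAt_Fa (by linarith [ht.1]) (by linarith [ht.2])).hasDerivWithinAt
        · intro t ht
          rw [interior_Icc] at ht
          have := concave_nonneg_inside hconv hhalfI2 h1yI hnegGhalf hnegG1y (ht.1).le (ht.2).le
          simp only [Pi.neg_apply] at this
          linarith
      have := hanti ⟨hcase2, hcase3⟩ ⟨by linarith, le_refl _⟩ hcase3
      linarith [hF1y]
    · -- monotone on [1-y, 1]
      have hmono : MonotoneOn (Fa y C) (Icc (1 - y) 1) := by
        apply monotoneOn_of_hasDerivWithinAt_nonneg (f' := Ga y C) (convex_Icc _ _) ((continuous_Fa y C).continuousOn)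
        · intro t ht
          rw [interior_Icc] at ht
          exact (hasDerivAt_Fa (by linarith [ht.1]) ht.2).hasDerivWithinAt
        · intro t ht
          rw [interior_Icc] at ht
          have := concave_nonpos_right hconv hhalfI2 ⟨by linarith [ht.1], ht.2⟩
            hnegGhalf hnegG1y (ht.1).le (by linarith)
          simp only [Pi.neg_apply] at this
          linarith
      have := hmono ⟨le_refl _, by linarith⟩ ⟨hcase3, hx1⟩ hcase3
      linarith [hF1y]
  -- translate back to the original statement
  have hlog1 : x * Real.log (x / y) = x * Real.log x - x * Real.log y := by
    rcases eq_or_ne x 0 with h | h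
    · simp [h]
    · rw [Real.log_div h hy0.ne']; ring
  have hlog2 : (1 - x) * Real.log ((1 - x) / (1 - y))
      = (1 - x) * Real.log (1 - x) - (1 - x) * Real.log (1 - y) := by
    rcases eq_or_ne (1 - x) 0 with h | h
    · simp [h]
    · rw [Real.log_div h h1y.ne']; ring
  have hlog3 : Real.log ((1 - y) / y) = L := Real.log_div h1y.ne' hy0.ne'
  rw [hlog1, hlog2, hlog3, ge_iff_le, ← hCdef]
  unfold Fa at hmain
  linarith

end Stmt10Aux

/-- Quadratic lower bound for the binary (Fermi–Dirac)
relative entropy: for `y ∈ (0,1)`, `y ≠ 1/2`, and `x ∈ [0,1]`,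
`x ln(x/y) + (1−x) ln((1−x)/(1−y)) ≥ (ln((1−y)/y)/(1−2y)) (x−y)²`.
(The terms `x ln(x/y)` and `(1−x) ln((1−x)/(1−y))` vanish for `x = 0` and
`x = 1` respectively; in Lean this holds automatically since they carry the
factors `x` and `1 − x`.) -/
theorem stmt10 (y : ℝ) (hy0 : 0 < y) (hy1 : y < 1) (hy : y ≠ 1 / 2)
    (x : ℝ) (hx0 : 0 ≤ x) (hx1 : x ≤ 1) :
    x * Real.log (x / y) + (1 - x) * Real.log ((1 - x) / (1 - y)) ≥
      (Real.log ((1 - y) / y) / (1 - 2 * y)) * (x - y) ^ 2 := by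
  rcases lt_or_gt_of_ne hy with hlt | hgt
  · exact Stmt10Aux.key y hy0 (by linarith) x hx0 hx1
  · have h := Stmt10Aux.key (1 - y) (by linarith) (by linarith) (1 - x) (by linarith) (by linarith)
    have e0 : (1:ℝ) - (1 - x) = x := by ring
    have e0' : (1:ℝ) - (1 - y) = y := by ring
    rw [e0, e0'] at h
    have e1 : Real.log (y / (1 - y)) / (1 - 2 * (1 - y))
        = Real.log ((1 - y) / y) / (1 - 2 * y) := by
      have : y / (1 - y) = ((1 - y) / y)⁻¹ := by rw [inv_div]
      rw [this, Real.log_inv]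
      rw [show (1:ℝ) - 2 * (1 - y) = -(1 - 2 * y) by ring, neg_div_neg_eq]
    rw [e1] at h
    have e2 : (1 - x - (1 - y)) ^ 2 = (x - y) ^ 2 := by ring
    rw [e2] at h
    linarith [h]
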